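/- Let a = u + iv be a complex number with u ≥ 0, and let z₀ = x₀ + i y₀ with y₀ > max(0, −v). For x ≥ x₀ define z(x) = x + i(y₀ − (x₀/y₀)(x − x₀)) (the half-line starting at z₀ that is perpendicular to the segment from 0 to z₀), and set F(x) = Re(z(x) + a·Log z(x)). Then F is strictly increasing on [x₀, ∞). -/

import Mathlib

open Real Complex Set

/-- The half-line starting at `z₀ = x₀ + i y₀`, perpendicular to the segment from `0` to `z₀`:
`z(x) = x + i(y₀ − (x₀/y₀)(x − x₀))`. -/
noncomputable def perpPath (x₀ y₀ : ℝ) (x : ℝ) : ℂ :=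
  (x : ℂ) + ((y₀ - (x₀ / y₀) * (x - x₀) : ℝ) : ℂ) * Complex.I

/-- The phase function `F(x) = Re(z(x) + a·Log z(x))` along that half-line. -/
noncomputable def phaseFperp (a : ℂ) (x₀ y₀ : ℝ) (x : ℝ) : ℝ :=
  (perpPath x₀ y₀ x + a * Complex.log (perpPath x₀ y₀ x)).re

lemma perpPath_re (x₀ y₀ x : ℝ) : (perpPath x₀ y₀ x).re = x := by
  simp [perpPath]

lemma perpPath_im (x₀ y₀ x : ℝ) : (perpPath x₀ y₀ x).im = y₀ - (x₀ / y₀) * (x - x₀) := by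
  simp [perpPath]

lemma perpPath_slit (x₀ y₀ x : ℝ) (hy : 0 < y₀) (hx : x₀ ≤ x) :
    perpPath x₀ y₀ x ∈ Complex.slitPlane := by
  rw [Complex.mem_slitPlane_iff, perpPath_re, perpPath_im]
  by_contra h
  push_neg at h
  obtain ⟨h1, h2⟩ := h
  have hyne : y₀ ≠ 0 := ne_of_gt hy
  have h3 : y₀ * y₀ = x₀ * (x - x₀) := by
    field_simp at h2
    nlinarith [h2]
  nlinarith [sq_nonneg (x - x₀)]

theorem stmt_2 (u v x₀ y₀ : ℝ) (hu : 0 ≤ u) (hy₀ : max 0 (-v) < y₀)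
    (a : ℂ) (ha : a = (u : ℂ) + (v : ℂ) * Complex.I) :
    StrictMonoOn (phaseFperp a x₀ y₀) (Set.Ici x₀) := by
  have hy : 0 < y₀ := lt_of_le_of_lt (le_max_left _ _) hy₀
  have hv : -v < y₀ := lt_of_le_of_lt (le_max_right _ _) hy₀
  have hyne : y₀ ≠ 0 := ne_of_gt hy
  set m : ℝ := x₀ / y₀ with hm
  set c : ℂ := 1 + (-m : ℝ) * Complex.I with hc
  -- derivative of perpPath
  have hperp : ∀ x : ℝ, HasDerivAt (perpPath x₀ y₀) c x := by
    intro x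
    have h1 : HasDerivAt (fun x : ℝ => ((x : ℝ) : ℂ)) 1 x := by
      simpa using (hasDerivAt_id x).ofReal_comp
    have h2 : HasDerivAt (fun x : ℝ => (y₀ - m * (x - x₀) : ℝ)) (-m) x := by
      simpa using (((hasDerivAt_id x).sub_const x₀).const_mul m).const_sub y₀
    have h3 := (h2.ofReal_comp).mul_const Complex.I
    have h4 := h1.add h3
    have heq : perpPath x₀ y₀ = fun x : ℝ =>
        ((x : ℝ) : ℂ) + ((y₀ - m * (x - x₀) : ℝ) : ℂ) * Complex.I := by
      funext x; rw [perpPath, hm]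
    rw [heq]
    exact h4
  have key : ∀ x ∈ Set.Ici x₀,
      HasDerivAt (phaseFperp a x₀ y₀) ((c + a * ((perpPath x₀ y₀ x)⁻¹ * c)).re) x := by
    intro x hx
    have hslit := perpPath_slit x₀ y₀ x hy hx
    have hlog : HasDerivAt (fun x => Complex.log (perpPath x₀ y₀ x))
        ((perpPath x₀ y₀ x)⁻¹ * c) x :=
      (Complex.hasDerivAt_log hslit).comp x (hperp x)
    have hg : HasDerivAt (fun x => perpPath x₀ y₀ x + a * Complex.log (perpPath x₀ y₀ x))
        (c + a * ((perpPath x₀ y₀ x)⁻¹ * c)) x := (hperp x).add (hlog.const_mul a)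
    exact (Complex.reCLM.hasFDerivAt.comp_hasDerivAt x hg)
  -- positivity of derivative
  have hpos : ∀ x ∈ Set.Ici x₀, 0 < (c + a * ((perpPath x₀ y₀ x)⁻¹ * c)).re := by
    intro x hx
    have hx' : x₀ ≤ x := hx
    set Y : ℝ := y₀ - m * (x - x₀) with hY
    have hz : perpPath x₀ y₀ x ≠ 0 := Complex.slitPlane_ne_zero (perpPath_slit x₀ y₀ x hy hx')
    have hns : Complex.normSq (perpPath x₀ y₀ x) = x ^ 2 + Y ^ 2 := by
      simp [Complex.normSq_apply, perpPath_re, perpPath_im, hY]; ring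
    have hnspos : 0 < x ^ 2 + Y ^ 2 := by
      rw [← hns]
      exact Complex.normSq_pos.2 hz
    have hre : (c + a * ((perpPath x₀ y₀ x)⁻¹ * c)).re
        = 1 + ((u + v * m) * x + (v - u * m) * Y) / (x ^ 2 + Y ^ 2) := by
      rw [show a * ((perpPath x₀ y₀ x)⁻¹ * c) = (a * c) / (perpPath x₀ y₀ x) by ring]
      rw [Complex.add_re, Complex.div_re, hns, perpPath_re, perpPath_im]
      have hcre : c.re = 1 := by simp [hc]
      have hcim : c.im = -m := by simp [hc]
      rw [ha]
      simp [Complex.mul_re, Complex.mul_im, hcre, hcim, hY]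
      ring
    rw [hre]
    rw [show (1 : ℝ) + ((u + v * m) * x + (v - u * m) * Y) / (x ^ 2 + Y ^ 2)
        = (x ^ 2 + Y ^ 2 + ((u + v * m) * x + (v - u * m) * Y)) / (x ^ 2 + Y ^ 2) by
      field_simp]
    apply div_pos _ hnspos
    -- key algebra: N = (1+m²)(u(x-x₀)+v y₀), D = x₀²+y₀²+(1+m²)(x-x₀)², m y₀ = x₀
    have hmy : m * y₀ = x₀ := by rw [hm]; field_simp
    have hN : (u + v * m) * x + (v - u * m) * Y = (1 + m ^ 2) * (u * (x - x₀) + v * y₀) := by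
      rw [hY, hm]; field_simp; ring
    have hD : x ^ 2 + Y ^ 2 = x₀ ^ 2 + y₀ ^ 2 + (1 + m ^ 2) * (x - x₀) ^ 2 := by
      rw [hY, hm]; field_simp; ring
    rw [hN, hD]
    have hx0 : x₀ ^ 2 + y₀ ^ 2 = (1 + m ^ 2) * y₀ ^ 2 := by
      rw [← hmy]; ring
    nlinarith [sq_nonneg m, mul_nonneg hu (sub_nonneg.2 hx'), sq_nonneg (x - x₀),
      mul_pos hy (show 0 < y₀ + v by linarith)]
  exact strictMonoOn_of_deriv_pos (convex_Ici x₀)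
    (fun x hx => (key x hx).continuousAt.continuousWithinAt)
    (fun x hx => by
      rw [interior_Ici] at hx
      rw [(key x (Set.Ioi_subset_Ici_self hx)).deriv]
      exact hpos x (Set.Ioi_subset_Ici_self hx))
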